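/- Let x ∈ ℝ³ be nonzero and suppose (u,v), (u′,v′) ∈ ℂ² ∖ {(0,0)} satisfy h(u,v) = x and h(u′,v′) = −x. Then u·v′ − u′·v ≠ 0; equivalently, the 2×2 matrix whose columns are the coefficient vectors (−v, u) and (−v′, u′) of the linear polynomials p(t) = u·t − v and q(t) = u′·t − v′ has nonzero determinant. In particular, Hopf lifts of antipodal nonzero vectors in ℝ³ are linearly independent over ℂ. -/

import Mathlib

/-- The Hopf map `h : ℂ² → ℝ³`, where `ℝ³` is identified with `ℂ × ℝ`:
`h(u,v) = (2·u·conj v, |u|² − |v|²)`. -/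
noncomputable def hopf (p : ℂ × ℂ) : ℂ × ℝ :=
  (2 * p.1 * (starRingEnd ℂ) p.2, ‖p.1‖ ^ 2 - ‖p.2‖ ^ 2)

/-- Hopf lifts of antipodal nonzero vectors of `ℝ³` are linearly independent
over `ℂ`: if `h(u,v) = x` and `h(u′,v′) = −x` with `x ≠ 0`, then
`u·v′ − u′·v ≠ 0`; equivalently, the 2×2 matrix whose columns are the
coefficient vectors `(−v, u)` and `(−v′, u′)` of `p(t) = u·t − v` and
`q(t) = u′·t − v′` has nonzero determinant. -/
theorem hopf_antipodal_lifts_indep (x : ℂ × ℝ) (hx : x ≠ 0)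
    (u v u' v' : ℂ) (h0 : (u, v) ≠ (0, 0)) (h0' : (u', v') ≠ (0, 0))
    (h1 : hopf (u, v) = x) (h2 : hopf (u', v') = -x) :
    u * v' - u' * v ≠ 0 ∧ (Matrix.det !![-v, -v'; u, u']) ≠ 0 := by
  have hdet : Matrix.det !![-v, -v'; u, u'] = u * v' - u' * v := by
    simp [Matrix.det_fin_two_of]; ring
  suffices h : u * v' - u' * v ≠ 0 by
    exact ⟨h, by rw [hdet]; exact h⟩
  intro hc
  have hc' : u * v' = u' * v := by linear_combination hc
  obtain ⟨l, hu', hv'⟩ : ∃ l : ℂ, u' = l * u ∧ v' = l * v := by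
    by_cases hu : u = 0
    · have hv : v ≠ 0 := by
        intro hv; exact h0 (by simp [hu, hv])
      have hu'0 : u' = 0 := by
        have h2 := hc'
        rw [hu] at h2
        simp only [zero_mul] at h2
        rcases mul_eq_zero.mp h2.symm with h | h
        · exact h
        · exact absurd h hv
      exact ⟨v' / v, by simp [hu'0, hu], by field_simp⟩
    · refine ⟨u' / u, by field_simp, ?_⟩
      rw [div_mul_eq_mul_div, eq_div_iff hu]
      linear_combination hc'
  have e1 : (2 : ℂ) * u * (starRingEnd ℂ) v = x.1 := by
    have := congrArg Prod.fst h1; simpa [hopf] using this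
  have e2 : ‖u‖ ^ 2 - ‖v‖ ^ 2 = x.2 := by
    have := congrArg Prod.snd h1; simpa [hopf] using this
  have f1 : (2 : ℂ) * u' * (starRingEnd ℂ) v' = -x.1 := by
    have := congrArg Prod.fst h2; simpa [hopf] using this
  have f2 : ‖u'‖ ^ 2 - ‖v'‖ ^ 2 = -x.2 := by
    have := congrArg Prod.snd h2; simpa [hopf] using this
  have hlc : ((‖l‖ ^ 2 : ℝ) : ℂ) = l * (starRingEnd ℂ) l := by
    rw [Complex.sq_norm]
    exact_mod_cast (Complex.mul_conj l).symm
  have key1 : ((1 + ‖l‖ ^ 2 : ℝ) : ℂ) * x.1 = 0 := by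
    have : (2 : ℂ) * u' * (starRingEnd ℂ) v'
        = ((‖l‖ ^ 2 : ℝ) : ℂ) * ((2 : ℂ) * u * (starRingEnd ℂ) v) := by
      rw [hu', hv', map_mul, hlc]; ring
    rw [f1, e1] at this
    push_cast at this ⊢
    linear_combination -this
  have key2 : (1 + ‖l‖ ^ 2) * x.2 = 0 := by
    have : ‖u'‖ ^ 2 - ‖v'‖ ^ 2
        = ‖l‖ ^ 2 * (‖u‖ ^ 2 - ‖v‖ ^ 2) := by
      rw [hu', hv', norm_mul, norm_mul]; ring
    rw [f2, e2] at this
    linear_combination -this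
  have hpos : (1 + ‖l‖ ^ 2 : ℝ) ≠ 0 := by positivity
  have hx1 : x.1 = 0 := by
    have : ((1 + ‖l‖ ^ 2 : ℝ) : ℂ) ≠ 0 := by
      exact_mod_cast Complex.ofReal_ne_zero.mpr hpos
    exact (mul_eq_zero.mp key1).resolve_left this
  have hx2 : x.2 = 0 := (mul_eq_zero.mp key2).resolve_left hpos
  exact hx (Prod.ext hx1 hx2)
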